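/- arXiv:1812.08838 — 2 statements merged into one kernel-verified Lean document; each statement's English description precedes it below -/
import Mathlib

section
/- Let ρ : ℤ → ℝ with ρ(-k) = ρ(k), let n ≥ 1, set ρ_n(k) = |ρ(k)|·1_{|k|<n} and 1_n(k) = 1_{|k|<n}, and let b ∈ [1,2]. Then Σ_{i,j,k,ℓ=0}^{n-1} ρ(j-k)² |ρ(i-j)| |ρ(k-ℓ)| ≤ n^{(3b-2)/b} · ‖ρ_n²‖_{ℓ¹(ℤ)} · ‖ρ_n‖_{ℓ^b(ℤ)}², where ρ_n² denotes the pointwise square of ρ_n. -/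
open Finset

/-- Shifted nonnegative sum bounded by the sum over the window `Ioo (-n) n`. -/
lemma shift_sum_le (f : ℤ → ℝ) (hf : ∀ m, 0 ≤ f m) (n j : ℕ) (hj : j < n) :
    ∑ i ∈ Finset.range n, f ((i : ℤ) - (j : ℤ))
      ≤ ∑ m ∈ Finset.Ioo (-(n : ℤ)) (n : ℤ), f m := by
  have h1 : ∑ i ∈ Finset.range n, f ((i : ℤ) - (j : ℤ))
      = ∑ m ∈ (Finset.range n).image (fun i : ℕ => (i : ℤ) - (j : ℤ)), f m := by
    rw [Finset.sum_image]
    intro a _ c _ h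
    have h' : (a : ℤ) - j = (c : ℤ) - j := h
    omega
  rw [h1]
  apply Finset.sum_le_sum_of_subset_of_nonneg
  · intro m hm
    simp only [Finset.mem_image, Finset.mem_range] at hm
    obtain ⟨i, hi, rfl⟩ := hm
    rw [Finset.mem_Ioo]
    omega
  · intro m _ _; exact hf m

/-- Hölder with one function constant 1: `∑ g ≤ n^{(b-1)/b} (∑ g^b)^{1/b}`. -/
lemma holder_row (b : ℝ) (hb1 : 1 ≤ b) (n : ℕ) (g : ℕ → ℝ) (hg : ∀ i, 0 ≤ g i) :
    ∑ i ∈ Finset.range n, g i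
      ≤ (n : ℝ) ^ ((b - 1) / b) * (∑ i ∈ Finset.range n, g i ^ b) ^ (1 / b) := by
  rcases eq_or_lt_of_le hb1 with hb | hb
  · subst hb
    simp [Real.rpow_natCast]
  · have hpq : Real.HolderConjugate (b / (b - 1)) b := by
      rw [Real.holderConjugate_iff]
      constructor
      · rw [lt_div_iff₀ (by linarith)]; linarith
      · field_simp
        ring
    have := Real.inner_le_Lp_mul_Lq (s := Finset.range n) (fun _ => (1 : ℝ)) g hpq
    simp only [one_mul, abs_one, Real.one_rpow, Finset.sum_const, Finset.card_range,
      nsmul_eq_mul, mul_one] at this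
    have habs : ∀ i ∈ Finset.range n, |g i| ^ b = g i ^ b := fun i _ => by
      rw [abs_of_nonneg (hg i)]
    rw [Finset.sum_congr rfl habs] at this
    refine this.trans (le_of_eq ?_)
    congr 1
    rw [one_div_div]

/-- The convolution estimate behind Theorem 1.2(ii): for `ρ` symmetric, `n ≥ 1`, `b ∈ [1,2]`,
`Σ_{i,j,k,ℓ=0}^{n-1} ρ(j-k)² |ρ(i-j)||ρ(k-ℓ)| ≤ n^{(3b-2)/b} ‖ρ_n²‖_{ℓ¹} ‖ρ_n‖_{ℓ^b}²`. -/
theorem fourfold_sum_sparse_bound (ρ : ℤ → ℝ) (hsym : ∀ k, ρ (-k) = ρ k)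
    (n : ℕ) (hn : 1 ≤ n) (b : ℝ) (hb : b ∈ Set.Icc (1 : ℝ) 2) :
    ∑ i ∈ Finset.range n, ∑ j ∈ Finset.range n, ∑ k ∈ Finset.range n, ∑ l ∈ Finset.range n,
        (ρ ((j : ℤ) - (k : ℤ))) ^ 2 * |ρ ((i : ℤ) - (j : ℤ))| * |ρ ((k : ℤ) - (l : ℤ))|
      ≤ (n : ℝ) ^ ((3 * b - 2) / b)
          * (∑ k ∈ Finset.Ioo (-(n : ℤ)) (n : ℤ), (ρ k) ^ 2)
          * (∑ k ∈ Finset.Ioo (-(n : ℤ)) (n : ℤ), |ρ k| ^ b) ^ ((2 : ℝ) / b) := by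
  obtain ⟨hb1, hb2⟩ := hb
  have hbpos : 0 < b := by linarith
  set B : ℝ := ∑ k ∈ Finset.Ioo (-(n : ℤ)) (n : ℤ), |ρ k| ^ b with hB
  set P : ℝ := ∑ k ∈ Finset.Ioo (-(n : ℤ)) (n : ℤ), (ρ k) ^ 2 with hP
  have hBnonneg : 0 ≤ B := Finset.sum_nonneg fun k _ =>
    Real.rpow_nonneg (abs_nonneg _) b
  set A : ℕ → ℝ := fun j => ∑ i ∈ Finset.range n, |ρ ((i : ℤ) - (j : ℤ))| with hA
  set C : ℝ := (n : ℝ) ^ ((b - 1) / b) * B ^ (1 / b) with hC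
  have hCnonneg : 0 ≤ C :=
    mul_nonneg (Real.rpow_nonneg (Nat.cast_nonneg n) _) (Real.rpow_nonneg hBnonneg _)
  -- bound on A j
  have hAC : ∀ j ∈ Finset.range n, A j ≤ C := by
    intro j hj
    rw [Finset.mem_range] at hj
    calc A j ≤ (n : ℝ) ^ ((b - 1) / b)
          * (∑ i ∈ Finset.range n, |ρ ((i : ℤ) - (j : ℤ))| ^ b) ^ (1 / b) :=
        holder_row b hb1 n _ (fun i => abs_nonneg _)
      _ ≤ C := by
        apply mul_le_mul_of_nonneg_left _ (Real.rpow_nonneg (Nat.cast_nonneg n) _)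
        apply Real.rpow_le_rpow (Finset.sum_nonneg fun i _ =>
          Real.rpow_nonneg (abs_nonneg _) b) _ (by positivity)
        exact shift_sum_le (fun m => |ρ m| ^ b)
          (fun m => Real.rpow_nonneg (abs_nonneg _) b) n j hj
  have hAnonneg : ∀ j, 0 ≤ A j := fun j =>
    Finset.sum_nonneg fun i _ => abs_nonneg _
  -- rearrange the fourfold sum
  have e1 : ∀ j k : ℕ, (ρ ((j : ℤ) - (k : ℤ))) ^ 2 * A j * A k
      = ∑ i ∈ Finset.range n, ∑ l ∈ Finset.range n,
        (ρ ((j : ℤ) - (k : ℤ))) ^ 2 * |ρ ((i : ℤ) - (j : ℤ))| * |ρ ((k : ℤ) - (l : ℤ))| := by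
    intro j k
    have hAk : A k = ∑ l ∈ Finset.range n, |ρ ((k : ℤ) - (l : ℤ))| := by
      rw [hA]
      apply Finset.sum_congr rfl; intro l _
      rw [show (l : ℤ) - (k : ℤ) = -((k : ℤ) - (l : ℤ)) from by ring, hsym]
    rw [hAk, hA, mul_assoc, Finset.sum_mul_sum, Finset.mul_sum]
    apply Finset.sum_congr rfl; intro i _
    rw [Finset.mul_sum]
    apply Finset.sum_congr rfl; intro l _
    ring
  have hre : ∑ i ∈ Finset.range n, ∑ j ∈ Finset.range n, ∑ k ∈ Finset.range n,
        ∑ l ∈ Finset.range n,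
        (ρ ((j : ℤ) - (k : ℤ))) ^ 2 * |ρ ((i : ℤ) - (j : ℤ))| * |ρ ((k : ℤ) - (l : ℤ))|
      = ∑ j ∈ Finset.range n, ∑ k ∈ Finset.range n,
        (ρ ((j : ℤ) - (k : ℤ))) ^ 2 * A j * A k := by
    rw [Finset.sum_comm]
    apply Finset.sum_congr rfl; intro j _
    rw [Finset.sum_comm]
    apply Finset.sum_congr rfl; intro k _
    exact (e1 j k).symm
  rw [hre]
  have step1 : ∑ j ∈ Finset.range n, ∑ k ∈ Finset.range n,
        (ρ ((j : ℤ) - (k : ℤ))) ^ 2 * A j * A k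
      ≤ ∑ j ∈ Finset.range n, ∑ k ∈ Finset.range n,
        (ρ ((j : ℤ) - (k : ℤ))) ^ 2 * C * C := by
    apply Finset.sum_le_sum; intro j hj
    apply Finset.sum_le_sum; intro k hk
    have h1 : (ρ ((j : ℤ) - (k : ℤ))) ^ 2 * A j * A k
        ≤ (ρ ((j : ℤ) - (k : ℤ))) ^ 2 * C * A k := by
      apply mul_le_mul_of_nonneg_right _ (hAnonneg k)
      exact mul_le_mul_of_nonneg_left (hAC j hj) (sq_nonneg _)
    refine h1.trans ?_
    exact mul_le_mul_of_nonneg_left (hAC k hk) (mul_nonneg (sq_nonneg _) hCnonneg)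
  refine step1.trans ?_
  have step2 : ∑ j ∈ Finset.range n, ∑ k ∈ Finset.range n,
        (ρ ((j : ℤ) - (k : ℤ))) ^ 2 * C * C
      ≤ (n : ℝ) * P * (C * C) := by
    have : ∀ j ∈ Finset.range n, ∑ k ∈ Finset.range n,
        (ρ ((j : ℤ) - (k : ℤ))) ^ 2 * C * C ≤ P * (C * C) := by
      intro j hj
      rw [Finset.mem_range] at hj
      have h2 : ∑ k ∈ Finset.range n, (ρ ((j : ℤ) - (k : ℤ))) ^ 2
          ≤ P := by
        rw [hP]
        have := shift_sum_le (fun m => (ρ m) ^ 2) (fun m => sq_nonneg _) n j hj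
        refine le_trans (le_of_eq ?_) this
        apply Finset.sum_congr rfl; intro k _
        rw [show (j : ℤ) - (k : ℤ) = -((k : ℤ) - (j : ℤ)) by ring, hsym]
      calc ∑ k ∈ Finset.range n, (ρ ((j : ℤ) - (k : ℤ))) ^ 2 * C * C
          = (∑ k ∈ Finset.range n, (ρ ((j : ℤ) - (k : ℤ))) ^ 2) * (C * C) := by
            rw [Finset.sum_mul]; apply Finset.sum_congr rfl; intro k _; ring
        _ ≤ P * (C * C) := by
            apply mul_le_mul_of_nonneg_right h2 (mul_nonneg hCnonneg hCnonneg)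
    calc ∑ j ∈ Finset.range n, ∑ k ∈ Finset.range n,
          (ρ ((j : ℤ) - (k : ℤ))) ^ 2 * C * C
        ≤ ∑ j ∈ Finset.range n, P * (C * C) := Finset.sum_le_sum this
      _ = (n : ℝ) * P * (C * C) := by
          rw [Finset.sum_const, Finset.card_range, nsmul_eq_mul]; ring
  refine step2.trans (le_of_eq ?_)
  -- arithmetic: n * P * C² = n^{(3b-2)/b} * P * B^{2/b}
  have hnpos : (0 : ℝ) < n := by exact_mod_cast hn
  have hCC : C * C = (n : ℝ) ^ (2 * (b - 1) / b) * B ^ ((2 : ℝ) / b) := by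
    have h1 : (n : ℝ) ^ ((b - 1) / b) * (n : ℝ) ^ ((b - 1) / b)
        = (n : ℝ) ^ (2 * (b - 1) / b) := by
      rw [← Real.rpow_add hnpos]; congr 1; ring
    have h2 : B ^ ((1 : ℝ) / b) * B ^ ((1 : ℝ) / b) = B ^ ((2 : ℝ) / b) := by
      rcases eq_or_lt_of_le hBnonneg with hB0 | hB0
      · rw [← hB0, Real.zero_rpow (by positivity), Real.zero_rpow (by positivity)]
        ring
      · rw [← Real.rpow_add hB0]; congr 1; ring
    calc C * C = ((n : ℝ) ^ ((b - 1) / b) * (n : ℝ) ^ ((b - 1) / b))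
          * (B ^ ((1 : ℝ) / b) * B ^ ((1 : ℝ) / b)) := by rw [hC]; ring
      _ = (n : ℝ) ^ (2 * (b - 1) / b) * B ^ ((2 : ℝ) / b) := by rw [h1, h2]
  rw [hCC]
  have hn1 : (n : ℝ) * (n : ℝ) ^ (2 * (b - 1) / b) = (n : ℝ) ^ ((3 * b - 2) / b) := by
    nth_rewrite 1 [← Real.rpow_one (n : ℝ)]
    rw [← Real.rpow_add hnpos]
    congr 1
    field_simp
    ring
  rw [← hn1]
  ring
end

section
/- Let F be a centered square-integrable functional of an isonormal Gaussian process such that F = δ(u) for some u in the domain of the divergence δ, with E[⟨DF, u⟩_H] = 1 (where F ∈ 𝔻^{1,2}). Then d_TV(F, N(0,1)) ≤ 2·Var(⟨DF, u⟩_H)^{1/2}. -/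
open MeasureTheory ProbabilityTheory

open Real Set Filter

noncomputable def φg (t : ℝ) : ℝ := Real.exp (-(t ^ 2 / 2))

lemma φg_cont : Continuous φg := by
  unfold φg; fun_prop

lemma φg_pos (t : ℝ) : 0 < φg t := Real.exp_pos _

lemma φg_eq (t : ℝ) : φg t = Real.exp (-(1/2 : ℝ) * t ^ 2) := by
  unfold φg; ring_nf

lemma φg_int : Integrable φg := by
  have h := integrable_exp_neg_mul_sq (b := (1:ℝ)/2) one_half_pos
  exact h.congr (by filter_upwards with t using (φg_eq t).symm)

lemma expφg (x : ℝ) : Real.exp (x ^ 2 / 2) * φg x = 1 := by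
  unfold φg
  rw [← Real.exp_add]
  ring_nf
  exact Real.exp_zero

lemma hasDerivAt_φg (t : ℝ) : HasDerivAt φg (-t * φg t) t := by
  have h1 : HasDerivAt (fun x : ℝ => -(x ^ 2 / 2)) (-t) t := by
    have := ((hasDerivAt_pow 2 t).div_const 2).fun_neg
    exact this.congr_deriv (by ring)
  have h2 := h1.exp
  exact h2.congr_deriv (by unfold φg; ring)

lemma hasDerivAt_expsq (x : ℝ) :
    HasDerivAt (fun x : ℝ => Real.exp (x ^ 2 / 2)) (x * Real.exp (x ^ 2 / 2)) x := by
  have h1 : HasDerivAt (fun x : ℝ => x ^ 2 / 2) x x := by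
    have := (hasDerivAt_pow 2 x).div_const 2
    exact this.congr_deriv (by ring)
  have h2 := h1.exp
  convert h2 using 1
  ring

lemma int_t_φg : Integrable (fun t : ℝ => -t * φg t) := by
  have h := (integrable_mul_exp_neg_mul_sq (b := (1:ℝ)/2) one_half_pos).neg
  exact h.congr (by filter_upwards with t; simp only [Pi.neg_apply]; rw [φg_eq]; ring)

lemma tendsto_φg_atBot : Tendsto φg atBot (nhds 0) := by
  have h1 : Tendsto (fun t : ℝ => t ^ 2) atBot atTop := by
    have h0 : Tendsto (Neg.neg : ℝ → ℝ) atBot atTop := tendsto_neg_atBot_atTop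
    have := (tendsto_pow_atTop (by norm_num : (2:ℕ) ≠ 0)).comp h0
    exact this.congr (fun t => by simp [Function.comp, neg_pow])
  have h2 : Tendsto (fun t : ℝ => -(t ^ 2 / 2)) atBot atBot :=
    tendsto_neg_atTop_atBot.comp (h1.atTop_div_const (by norm_num))
  exact Real.tendsto_exp_atBot.comp h2

lemma tendsto_φg_atTop : Tendsto φg atTop (nhds 0) := by
  have h1 : Tendsto (fun t : ℝ => t ^ 2) atTop atTop := tendsto_pow_atTop (by norm_num : (2:ℕ) ≠ 0)
  have h2 : Tendsto (fun t : ℝ => -(t ^ 2 / 2)) atTop atBot :=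
    tendsto_neg_atTop_atBot.comp (h1.atTop_div_const (by norm_num))
  exact Real.tendsto_exp_atBot.comp h2

lemma φg_tail_neg {x : ℝ} (hx : x < 0) : ∫ t in Iic x, φg t ≤ φg x / (-x) := by
  have key : ∫ t in Iic x, -t * φg t = φg x := by
    have := integral_Iic_of_hasDerivAt_of_tendsto' (f := φg) (f' := fun t => -t * φg t)
      (a := x) (m := 0) (fun t _ => hasDerivAt_φg t) int_t_φg.integrableOn tendsto_φg_atBot
    rw [this, sub_zero]
  have mono : ∀ t ∈ Iic x, φg t ≤ (-x)⁻¹ * (-t * φg t) := by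
    intro t ht
    have ht' : t ≤ x := ht
    have h1 : (1 : ℝ) ≤ (-t) / (-x) := (one_le_div (by linarith)).2 (by linarith)
    have h2 : φg t ≤ (-t) / (-x) * φg t := le_mul_of_one_le_left (φg_pos t).le h1
    calc φg t ≤ (-t) / (-x) * φg t := h2
      _ = (-x)⁻¹ * (-t * φg t) := by ring
  calc ∫ t in Iic x, φg t ≤ ∫ t in Iic x, (-x)⁻¹ * (-t * φg t) :=
        setIntegral_mono_on φg_int.integrableOn (int_t_φg.integrableOn.const_mul _)
          measurableSet_Iic mono
    _ = (-x)⁻¹ * ∫ t in Iic x, -t * φg t := integral_const_mul _ _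
    _ = φg x / (-x) := by rw [key]; ring

lemma φg_tail_pos {x : ℝ} (hx : 0 < x) : ∫ t in Ioi x, φg t ≤ φg x / x := by
  have key : ∫ t in Ioi x, t * φg t = φg x := by
    have hd : ∀ t ∈ Ici x, HasDerivAt (fun t : ℝ => -φg t) (t * φg t) t := by
      intro t _
      have := (hasDerivAt_φg t).fun_neg
      exact this.congr_deriv (by ring)
    have hint : IntegrableOn (fun t : ℝ => t * φg t) (Ioi x) := by
      have := int_t_φg.neg
      exact (this.congr (by filter_upwards with t; simp only [Pi.neg_apply]; ring)).integrableOn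
    have htend : Tendsto (fun t : ℝ => -φg t) atTop (nhds 0) := by
      have := tendsto_φg_atTop.neg; rwa [neg_zero] at this
    have := integral_Ioi_of_hasDerivAt_of_tendsto' hd hint htend
    rw [this]; ring
  have mono : ∀ t ∈ Ioi x, φg t ≤ x⁻¹ * (t * φg t) := by
    intro t ht
    have ht' : x < t := ht
    have h1 : (1 : ℝ) ≤ t / x := (one_le_div hx).2 ht'.le
    calc φg t ≤ t / x * φg t := le_mul_of_one_le_left (φg_pos t).le h1
      _ = x⁻¹ * (t * φg t) := by ring
  have hint : IntegrableOn (fun t : ℝ => t * φg t) (Ioi x) := by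
    exact (int_t_φg.neg.congr (by filter_upwards with t; simp only [Pi.neg_apply]; ring)).integrableOn
  calc ∫ t in Ioi x, φg t ≤ ∫ t in Ioi x, x⁻¹ * (t * φg t) :=
        setIntegral_mono_on φg_int.integrableOn (hint.const_mul _) measurableSet_Ioi mono
    _ = x⁻¹ * ∫ t in Ioi x, t * φg t := integral_const_mul _ _
    _ = φg x / x := by rw [key]; ring



lemma mul_mul_div_cancel' (a b c : ℝ) (ha : a ≠ 0) : a * b * (c / a) = b * c := by
  field_simp

lemma stein_solution (h : ℝ → ℝ) (hc : Continuous h) (m : ℝ) (hb : ∀ x, |h x - m| ≤ 1)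
    (hzero : ∫ t, (h t - m) * φg t = 0) :
    ∃ g : ℝ → ℝ, ContDiff ℝ 1 g ∧ (∃ C : ℝ, ∀ x, |g x| ≤ C ∧ |deriv g x| ≤ C) ∧
      (∀ x, |deriv g x| ≤ 2) ∧ ∀ x, deriv g x - x * g x = h x - m := by
  set k : ℝ → ℝ := fun t => h t - m with hk
  have hkc : Continuous k := hc.sub continuous_const
  have hkint : Integrable (fun t => k t * φg t) :=
    φg_int.bdd_mul (c := 1) (hkc.aestronglyMeasurable) (ae_of_all _ fun x => by simpa using hb x)
  set Φ : ℝ → ℝ := fun x => ∫ t in Iic x, k t * φg t with hΦ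
  set g : ℝ → ℝ := fun x => Real.exp (x ^ 2 / 2) * Φ x with hg
  -- derivative of Φ
  have hΦd : ∀ x, HasDerivAt Φ (k x * φg x) x := by
    intro x
    have heq : ∀ u : ℝ, Φ u = Φ 0 + ∫ t in (0:ℝ)..u, k t * φg t := by
      intro u
      have := intervalIntegral.integral_Iic_sub_Iic (hkint.integrableOn) (hkint.integrableOn) (a := (0:ℝ)) (b := u)
      simp only [hΦ]
      linarith
    have hD : HasDerivAt (fun u : ℝ => Φ 0 + ∫ t in (0:ℝ)..u, k t * φg t) (k x * φg x) x := by
      have := intervalIntegral.integral_hasDerivAt_right (f := fun t => k t * φg t)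
        (a := 0) (b := x) (hkint.intervalIntegrable)
        ((hkc.mul φg_cont).stronglyMeasurable.stronglyMeasurableAtFilter)
        ((hkc.mul φg_cont).continuousAt)
      exact this.const_add _
    exact hD.congr_of_eventuallyEq (Filter.Eventually.of_forall heq)
  have hgd : ∀ x, HasDerivAt g (x * g x + k x) x := by
    intro x
    have := (hasDerivAt_expsq x).mul (hΦd x)
    refine this.congr_deriv ?_
    have he := expφg x
    simp only [hg]
    linear_combination (k x) * he
  have hderiv_eq : ∀ x, deriv g x = x * g x + k x := fun x => (hgd x).deriv
  have hgcont : Continuous g := by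
    have : Differentiable ℝ g := fun x => (hgd x).differentiableAt
    exact this.continuous
  -- bound |Φ x| by gaussian tails
  have hΦabs_neg : ∀ x : ℝ, |Φ x| ≤ ∫ t in Iic x, φg t := by
    intro x
    calc |Φ x| ≤ ∫ t in Iic x, |k t| * |φg t| := by
          simpa [Real.norm_eq_abs] using
            norm_integral_le_integral_norm (μ := volume.restrict (Iic x)) (fun t => k t * φg t)
      _ ≤ ∫ t in Iic x, φg t := by
          apply setIntegral_mono_on
            ((hkint.abs.congr (Filter.Eventually.of_forall fun t => abs_mul _ _)).integrableOn)
            (φg_int.integrableOn) measurableSet_Iic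
          intro t _
          rw [abs_of_pos (φg_pos t)]
          exact mul_le_of_le_one_left (φg_pos t).le (hb t)
  have hΦabs_pos : ∀ x : ℝ, |Φ x| ≤ ∫ t in Ioi x, φg t := by
    intro x
    have hsplit : Φ x + ∫ t in Ioi x, k t * φg t = 0 := by
      have := intervalIntegral.integral_Iic_add_Ioi (b := x)
        (hkint.integrableOn) (hkint.integrableOn)
      rw [hzero] at this
      exact this
    have : Φ x = -∫ t in Ioi x, k t * φg t := by linarith
    rw [this, abs_neg]
    calc |∫ t in Ioi x, k t * φg t| ≤ ∫ t in Ioi x, |k t| * |φg t| := by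
          simpa [Real.norm_eq_abs] using
            norm_integral_le_integral_norm (μ := volume.restrict (Ioi x)) (fun t => k t * φg t)
      _ ≤ ∫ t in Ioi x, φg t := by
          apply setIntegral_mono_on
            ((hkint.abs.congr (Filter.Eventually.of_forall fun t => abs_mul _ _)).integrableOn)
            (φg_int.integrableOn) measurableSet_Ioi
          intro t _
          rw [abs_of_pos (φg_pos t)]
          exact mul_le_of_le_one_left (φg_pos t).le (hb t)
  -- the key bound |x g x| ≤ 1
  have hxg : ∀ x : ℝ, |x * g x| ≤ 1 := by
    intro x
    rcases lt_trichotomy x 0 with hx | hx | hx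
    · have h1 : |Φ x| ≤ φg x / (-x) := (hΦabs_neg x).trans (φg_tail_neg hx)
      calc |x * g x| = (-x) * Real.exp (x ^ 2 / 2) * |Φ x| := by
            rw [hg, abs_mul, abs_mul, abs_of_pos (Real.exp_pos _), abs_of_neg hx]; ring
        _ ≤ (-x) * Real.exp (x ^ 2 / 2) * (φg x / (-x)) := by
            apply mul_le_mul_of_nonneg_left h1
              (mul_nonneg (by linarith) (Real.exp_pos _).le)
        _ = Real.exp (x ^ 2 / 2) * φg x :=
            mul_mul_div_cancel' _ _ _ (by linarith)
        _ = 1 := expφg x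
    · simp [hx]
    · have h1 : |Φ x| ≤ φg x / x := (hΦabs_pos x).trans (φg_tail_pos hx)
      calc |x * g x| = x * Real.exp (x ^ 2 / 2) * |Φ x| := by
            rw [hg, abs_mul, abs_mul, abs_of_pos (Real.exp_pos _), abs_of_pos hx]; ring
        _ ≤ x * Real.exp (x ^ 2 / 2) * (φg x / x) := by
            apply mul_le_mul_of_nonneg_left h1 (by positivity)
        _ = Real.exp (x ^ 2 / 2) * φg x :=
            mul_mul_div_cancel' _ _ _ (ne_of_gt hx)
        _ = 1 := expφg x
  have hd2 : ∀ x, |deriv g x| ≤ 2 := by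
    intro x
    rw [hderiv_eq x]
    calc |x * g x + k x| ≤ |x * g x| + |k x| := abs_add_le _ _
      _ ≤ 1 + 1 := add_le_add (hxg x) (hb x)
      _ = 2 := by norm_num
  refine ⟨g, ?_, ?_, hd2, ?_⟩
  · rw [contDiff_one_iff_deriv]
    refine ⟨fun x => (hgd x).differentiableAt, ?_⟩
    rw [show deriv g = fun x => x * g x + k x from funext hderiv_eq]
    exact (continuous_id.mul hgcont).add hkc
  · refine ⟨Real.exp (1/2 : ℝ) * (∫ t, φg t) + 2, fun x => ⟨?_, ?_⟩⟩
    · have hφnn : 0 ≤ ∫ t, φg t := integral_nonneg (fun t => (φg_pos t).le)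
      rcases le_or_gt 1 |x| with hx1 | hx1
      · have : |g x| ≤ |x * g x| := by
          rw [abs_mul x (g x)]
          exact le_mul_of_one_le_left (abs_nonneg _) hx1
        have h2 := (this.trans (hxg x))
        nlinarith [Real.exp_pos (1/2 : ℝ), mul_nonneg (Real.exp_pos (1/2:ℝ)).le hφnn]
      · have hx2 : x ^ 2 / 2 ≤ 1/2 := by nlinarith [abs_nonneg x, sq_abs x]
        have he : Real.exp (x ^ 2 / 2) ≤ Real.exp (1/2 : ℝ) := Real.exp_le_exp.2 hx2
        have hΦle : |Φ x| ≤ ∫ t, φg t :=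
          (hΦabs_neg x).trans (setIntegral_le_integral φg_int
            (ae_of_all _ fun t => (φg_pos t).le))
        have : |g x| ≤ Real.exp (1/2 : ℝ) * (∫ t, φg t) := by
          rw [hg, abs_mul, abs_of_pos (Real.exp_pos _)]
          exact mul_le_mul he hΦle (abs_nonneg _) (Real.exp_pos _).le
        linarith
    · have := hd2 x
      have hφnn : 0 ≤ ∫ t, φg t := integral_nonneg (fun t => (φg_pos t).le)
      nlinarith [Real.exp_pos (1/2 : ℝ), mul_nonneg (Real.exp_pos (1/2:ℝ)).le hφnn]
  · intro x
    rw [hderiv_eq x]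
    simp only [hk]
    ring

lemma φg_total : ∫ t, φg t = Real.sqrt (2 * π) := by
  have h := integral_gaussian (1/2 : ℝ)
  have h2 : ∫ t, φg t = ∫ x : ℝ, Real.exp (-(1/2 : ℝ) * x ^ 2) := by
    congr 1; funext t; exact φg_eq t
  rw [h2, h]
  congr 1
  ring

lemma gaussianPDFReal_std (x : ℝ) :
    gaussianPDFReal 0 1 x = (Real.sqrt (2 * π))⁻¹ * φg x := by
  simp only [gaussianPDFReal, φg, NNReal.coe_one, mul_one, sub_zero]
  ring_nf

lemma integral_gaussianReal_std (f : ℝ → ℝ) :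
    ∫ x, f x ∂(gaussianReal 0 1) = ∫ x, gaussianPDFReal 0 1 x * f x := by
  rw [gaussianReal_of_var_ne_zero 0 one_ne_zero]
  have hpdf : (gaussianPDF 0 1) = fun x => ((gaussianPDFReal 0 1 x).toNNReal : ENNReal) :=
    rfl
  rw [hpdf, integral_withDensity_eq_integral_smul ((measurable_gaussianPDFReal 0 1).real_toNNReal)]
  congr 1; funext x
  rw [NNReal.smul_def, smul_eq_mul, Real.coe_toNNReal _ (gaussianPDFReal_nonneg 0 1 x)]

lemma gauss_zero (h : ℝ → ℝ) (hc : Continuous h) (h01 : ∀ x, h x ∈ Icc (0:ℝ) 1) :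
    ∫ t, (h t - ∫ x, h x ∂(gaussianReal 0 1)) * φg t = 0 := by
  set m := ∫ x, h x ∂(gaussianReal 0 1) with hm
  have hφh_int : Integrable (fun t => h t * φg t) :=
    φg_int.bdd_mul (c := 1) hc.aestronglyMeasurable
      (ae_of_all _ fun x => by rw [Real.norm_eq_abs, abs_of_nonneg (h01 x).1]; exact (h01 x).2)
  have hmφ_int : Integrable (fun t => m * φg t) := φg_int.const_mul m
  have hsqrtpos : (0:ℝ) < Real.sqrt (2 * π) := Real.sqrt_pos.2 (by positivity)
  have hmval : ∫ t, h t * φg t = Real.sqrt (2 * π) * m := by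
    have h1 : m = ∫ x, gaussianPDFReal 0 1 x * h x := integral_gaussianReal_std h
    have h2 : ∫ x, gaussianPDFReal 0 1 x * h x
        = (Real.sqrt (2 * π))⁻¹ * ∫ x, h x * φg x := by
      rw [← integral_const_mul]
      congr 1; funext x
      rw [gaussianPDFReal_std]
      ring
    rw [h1, h2, ← mul_assoc, mul_inv_cancel₀ hsqrtpos.ne', one_mul]
  have : ∫ t, (h t - m) * φg t = (∫ t, h t * φg t) - ∫ t, m * φg t := by
    rw [← integral_sub hφh_int hmφ_int]
    congr 1; funext t; ring
  rw [this, hmval, integral_const_mul, φg_total]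
  ring

lemma l1_le_sqrt_var {Ω : Type*} [MeasureSpace Ω] [IsProbabilityMeasure (ℙ : Measure Ω)]
    (G : Ω → ℝ) (hG2 : MemLp G 2 ℙ) (hGmean : ∫ ω, G ω ∂ℙ = 1) :
    ∫ ω, |1 - G ω| ∂ℙ ≤ Real.sqrt (variance G ℙ) := by
  have hGint : Integrable G ℙ := hG2.integrable one_le_two
  have hY2 : Integrable (fun ω => (G ω - 1)^2) ℙ := by
    have := (hG2.sub (memLp_const (1:ℝ))).integrable_sq
    exact this.congr (Filter.Eventually.of_forall fun ω => by simp)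
  have hYint : Integrable (fun ω => G ω - 1) ℙ := hGint.sub (integrable_const 1)
  have hA : Integrable (fun ω => |1 - G ω|) ℙ :=
    hYint.abs.congr (Filter.Eventually.of_forall fun ω => abs_sub_comm (G ω) 1)
  set a := ∫ ω, |1 - G ω| ∂ℙ with ha
  have ha0 : 0 ≤ a := integral_nonneg fun ω => abs_nonneg _
  have hvar_eq : variance G ℙ = ∫ ω, (G ω - 1)^2 ∂ℙ := by
    rw [variance_eq_integral hG2.aestronglyMeasurable.aemeasurable, hGmean]
  have key : a^2 ≤ ∫ ω, (G ω - 1)^2 ∂ℙ := by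
    have h0 : 0 ≤ ∫ ω, (|1 - G ω| - a)^2 ∂ℙ := integral_nonneg fun ω => sq_nonneg _
    have hexp : ∫ ω, (|1 - G ω| - a)^2 ∂ℙ = (∫ ω, (G ω - 1)^2 ∂ℙ) - a^2 := by
      have e : ∀ ω, (|1 - G ω| - a)^2 = ((G ω - 1)^2 - 2*a*|1 - G ω|) + a^2 := by
        intro ω
        rw [sub_sq, sq_abs]
        ring
      have hint2 : Integrable (fun ω => 2*a*|1 - G ω|) ℙ := hA.const_mul (2*a)
      have hint1 : Integrable (fun ω => (G ω - 1)^2 - 2*a*|1 - G ω|) ℙ := hY2.sub hint2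
      rw [show (fun ω => (|1 - G ω| - a)^2)
          = fun ω => ((G ω - 1)^2 - 2*a*|1 - G ω|) + a^2 from funext e]
      rw [integral_add hint1 (integrable_const _),
        integral_sub hY2 hint2, integral_const_mul, integral_const]
      simp only [probReal_univ, measure_univ, ENNReal.toReal_one, smul_eq_mul, one_mul]
      rw [← ha]
      ring
    linarith
  have := Real.le_sqrt_of_sq_le key
  rwa [hvar_eq]

lemma main_est {Ω : Type*} [MeasureSpace Ω] [IsProbabilityMeasure (ℙ : Measure Ω)]
    (F G : Ω → ℝ) (hFmeas : Measurable F)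
    (hF2 : MemLp F 2 ℙ) (hG2 : MemLp G 2 ℙ) (hGmean : ∫ ω, G ω ∂ℙ = 1)
    (hIBP : ∀ g : ℝ → ℝ, ContDiff ℝ 1 g → (∃ C : ℝ, ∀ x, |g x| ≤ C ∧ |deriv g x| ≤ C) →
      ∫ ω, F ω * g (F ω) ∂ℙ = ∫ ω, deriv g (F ω) * G ω ∂ℙ)
    (h : ℝ → ℝ) (hc : Continuous h) (h01 : ∀ x, h x ∈ Icc (0:ℝ) 1) :
    |(∫ ω, h (F ω) ∂ℙ) - ∫ x, h x ∂(gaussianReal 0 1)|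
      ≤ 2 * Real.sqrt (variance G ℙ) := by
  set m := ∫ x, h x ∂(gaussianReal 0 1) with hm
  have hγ : IsProbabilityMeasure (gaussianReal 0 1) := inferInstance
  have hγint : Integrable h (gaussianReal 0 1) :=
    (integrable_const (1:ℝ)).mono' hc.aestronglyMeasurable
      (ae_of_all _ fun x => by
        rw [Real.norm_eq_abs, abs_of_nonneg (h01 x).1]; exact (h01 x).2)
  have hm0 : 0 ≤ m := integral_nonneg fun x => (h01 x).1
  have hm1 : m ≤ 1 := by
    calc m ≤ ∫ _ : ℝ, (1:ℝ) ∂(gaussianReal 0 1) :=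
          integral_mono hγint (integrable_const 1) fun x => (h01 x).2
      _ = 1 := by simp
  have hb : ∀ x, |h x - m| ≤ 1 := fun x =>
    abs_le.2 ⟨by linarith [(h01 x).1], by linarith [(h01 x).2]⟩
  obtain ⟨g, hg1, hgC, hg2bd, hgeq⟩ := stein_solution h hc m hb (gauss_zero h hc h01)
  obtain ⟨C, hC⟩ := hgC
  have hIBPg := hIBP g hg1 ⟨C, hC⟩
  have hFint : Integrable F ℙ := hF2.integrable one_le_two
  have hGint : Integrable G ℙ := hG2.integrable one_le_two
  have hgFmeas : AEStronglyMeasurable (fun ω => deriv g (F ω)) ℙ :=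
    ((hg1.continuous_deriv le_rfl).measurable.comp hFmeas).aestronglyMeasurable
  have hdgF_int : Integrable (fun ω => deriv g (F ω)) ℙ :=
    (integrable_const (2:ℝ)).mono' hgFmeas
      (ae_of_all _ fun ω => by rw [Real.norm_eq_abs]; exact hg2bd _)
  have hhF_int : Integrable (fun ω => h (F ω)) ℙ :=
    (integrable_const (1:ℝ)).mono' ((hc.measurable.comp hFmeas).aestronglyMeasurable)
      (ae_of_all _ fun ω => by
        rw [Real.norm_eq_abs, abs_of_nonneg (h01 _).1]; exact (h01 _).2)
  have hdgFG_int : Integrable (fun ω => deriv g (F ω) * G ω) ℙ :=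
    hGint.bdd_mul (c := 2) hgFmeas (ae_of_all _ fun ω => by rw [Real.norm_eq_abs]; exact hg2bd _)
  have hFgF_int : Integrable (fun ω => F ω * g (F ω)) ℙ := by
    have := hFint.bdd_mul ((hg1.continuous.measurable.comp hFmeas).aestronglyMeasurable)
      (c := C) (ae_of_all _ fun ω => by rw [Real.norm_eq_abs]; exact (hC _).1)
    exact this.congr (Filter.Eventually.of_forall fun ω => mul_comm _ _)
  have h1G_int : Integrable (fun ω => |1 - G ω|) ℙ :=
    ((hGint.sub (integrable_const 1)).abs).congr
      (Filter.Eventually.of_forall fun ω => abs_sub_comm (G ω) 1)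
  have key : (∫ ω, h (F ω) ∂ℙ) - m = ∫ ω, deriv g (F ω) * (1 - G ω) ∂ℙ := by
    have step1 : (∫ ω, h (F ω) ∂ℙ) - m = ∫ ω, (h (F ω) - m) ∂ℙ := by
      rw [integral_sub hhF_int (integrable_const m), integral_const]
      simp [measure_univ]
    have step2 : ∫ ω, (h (F ω) - m) ∂ℙ = ∫ ω, (deriv g (F ω) - F ω * g (F ω)) ∂ℙ := by
      congr 1; funext ω; rw [← hgeq (F ω)]
    have step3 : ∫ ω, (deriv g (F ω) - F ω * g (F ω)) ∂ℙ
        = (∫ ω, deriv g (F ω) ∂ℙ) - ∫ ω, deriv g (F ω) * G ω ∂ℙ := by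
      rw [integral_sub hdgF_int hFgF_int, hIBPg]
    have step4 : (∫ ω, deriv g (F ω) ∂ℙ) - ∫ ω, deriv g (F ω) * G ω ∂ℙ
        = ∫ ω, deriv g (F ω) * (1 - G ω) ∂ℙ := by
      rw [← integral_sub hdgF_int hdgFG_int]
      congr 1; funext ω; ring
    rw [step1, step2, step3, step4]
  have habs_int : Integrable (fun ω => |deriv g (F ω)| * |1 - G ω|) ℙ := by
    have h2 : Integrable (fun ω => deriv g (F ω) - deriv g (F ω) * G ω) ℙ :=
      hdgF_int.sub hdgFG_int
    exact h2.abs.congr (Filter.Eventually.of_forall fun ω => by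
      show |deriv g (F ω) - deriv g (F ω) * G ω| = |deriv g (F ω)| * |1 - G ω|
      rw [← abs_mul]
      congr 1
      ring)
  calc |(∫ ω, h (F ω) ∂ℙ) - m| = |∫ ω, deriv g (F ω) * (1 - G ω) ∂ℙ| := by rw [key]
    _ ≤ ∫ ω, |deriv g (F ω)| * |1 - G ω| ∂ℙ := by
        simpa [Real.norm_eq_abs] using
          norm_integral_le_integral_norm (μ := (ℙ : Measure Ω))
            (fun ω => deriv g (F ω) * (1 - G ω))
    _ ≤ ∫ ω, 2 * |1 - G ω| ∂ℙ := by
        apply integral_mono habs_int (h1G_int.const_mul 2)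
        intro ω
        exact mul_le_mul_of_nonneg_right (hg2bd _) (abs_nonneg _)
    _ = 2 * ∫ ω, |1 - G ω| ∂ℙ := integral_const_mul _ _
    _ ≤ 2 * Real.sqrt (variance G ℙ) := by
        have := l1_le_sqrt_var G hG2 hGmean
        linarith


/-- The Malliavin-Stein bound: if a centered square-integrable `F` satisfies the integration by
parts identity `E[F g(F)] = E[g'(F) G]` (which holds with `G = ⟨DF, u⟩` when `F = δ(u)`), and
`E[G] = 1`, then `d_TV(F, N(0,1)) ≤ 2 √Var(G)`. -/
theorem malliavin_stein_bound {Ω : Type*} [MeasureSpace Ω]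
    [IsProbabilityMeasure (ℙ : Measure Ω)]
    (F G : Ω → ℝ) (hFmeas : Measurable F)
    (hF2 : MemLp F 2 ℙ) (hG2 : MemLp G 2 ℙ)
    (hFc : ∫ ω, F ω ∂ℙ = 0) (hGmean : ∫ ω, G ω ∂ℙ = 1)
    (hIBP : ∀ g : ℝ → ℝ, ContDiff ℝ 1 g → (∃ C : ℝ, ∀ x, |g x| ≤ C ∧ |deriv g x| ≤ C) →
      ∫ ω, F ω * g (F ω) ∂ℙ = ∫ ω, deriv g (F ω) * G ω ∂ℙ) :
    ∀ A : Set ℝ, MeasurableSet A →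
      |(Measure.map F ℙ A).toReal - ((gaussianReal 0 1) A).toReal|
        ≤ 2 * Real.sqrt (variance G ℙ) := by
  intro A hA
  set γ := gaussianReal 0 1 with hγdef
  set P := Measure.map F ℙ with hPdef
  have hPprob : IsProbabilityMeasure P := Measure.isProbabilityMeasure_map hFmeas.aemeasurable
  refine le_of_forall_pos_le_add fun ε hε => ?_
  set μ := P + γ with hμdef
  have hμfin : IsFiniteMeasure μ := inferInstance
  have hε2 : (ENNReal.ofReal (ε/2)) ≠ 0 := (ENNReal.ofReal_pos.2 (by linarith)).ne'
  obtain ⟨U, hAU, hUopen, _, hUA⟩ :=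
    hA.exists_isOpen_diff_lt (μ := μ) (measure_ne_top μ A) hε2
  obtain ⟨K, hKA, hKclosed, hKlt⟩ :=
    hA.exists_isClosed_lt_add (μ := μ) (measure_ne_top μ A) hε2
  have hAK : μ (A \ K) < ENNReal.ofReal (ε/2) :=
    measure_diff_lt_of_lt_add hKclosed.measurableSet.nullMeasurableSet hKA
      (measure_ne_top μ K) hKlt
  have hUK : μ (U \ K) ≤ ENNReal.ofReal ε := by
    have hsub : U \ K ⊆ (U \ A) ∪ (A \ K) := by
      intro x hx
      by_cases hxA : x ∈ A
      · exact Or.inr ⟨hxA, hx.2⟩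
      · exact Or.inl ⟨hx.1, hxA⟩
    calc μ (U \ K) ≤ μ ((U \ A) ∪ (A \ K)) := measure_mono hsub
      _ ≤ μ (U \ A) + μ (A \ K) := measure_union_le _ _
      _ ≤ ENNReal.ofReal (ε/2) + ENNReal.ofReal (ε/2) := add_le_add hUA.le hAK.le
      _ = ENNReal.ofReal ε := by
          rw [← ENNReal.ofReal_add (by linarith) (by linarith)]
          norm_num
  -- Urysohn function
  have hdisj : Disjoint Uᶜ K := by
    rw [Set.disjoint_compl_left_iff_subset]
    exact hKA.trans hAU
  obtain ⟨f, hf0, hf1, hf01⟩ :=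
    exists_continuous_zero_one_of_isClosed hUopen.isClosed_compl hKclosed hdisj
  set h : ℝ → ℝ := fun x => f x with hh
  have hc : Continuous h := f.continuous
  have h01 : ∀ x, h x ∈ Icc (0:ℝ) 1 := fun x => hf01 x
  have hUKmeas : MeasurableSet (U \ K) := hUopen.measurableSet.diff hKclosed.measurableSet
  have hind : ∀ x, |A.indicator (fun _ => (1:ℝ)) x - h x|
      ≤ (U \ K).indicator (fun _ => (1:ℝ)) x := by
    intro x
    by_cases hxK : x ∈ K
    · have hxA : x ∈ A := hKA hxK
      have : h x = 1 := hf1 hxK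
      simp [Set.indicator_of_mem hxA, this, Set.indicator_nonneg]
    · by_cases hxU : x ∈ U
      · have hxUK : x ∈ U \ K := ⟨hxU, hxK⟩
        rw [Set.indicator_of_mem hxUK]
        by_cases hxA : x ∈ A
        · rw [Set.indicator_of_mem hxA]
          rw [abs_le]
          exact ⟨by linarith [(h01 x).2], by linarith [(h01 x).1]⟩
        · rw [Set.indicator_of_notMem hxA]
          rw [abs_le]
          exact ⟨by linarith [(h01 x).2], by linarith [(h01 x).1]⟩
      · have hxA : x ∉ A := fun hxA => hxU (hAU hxA)
        have : h x = 0 := hf0 (by simpa using hxU)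
        simp [Set.indicator_of_notMem hxA, this, Set.indicator_nonneg]
  -- approximation in both measures
  have approx : ∀ (ν : Measure ℝ) [IsProbabilityMeasure ν],
      |(ν A).toReal - ∫ x, h x ∂ν| ≤ (ν (U \ K)).toReal := by
    intro ν hν
    have hind_int : Integrable (A.indicator (fun _ => (1:ℝ))) ν :=
      (integrable_const (1:ℝ)).indicator hA
    have hh_int : Integrable h ν :=
      (integrable_const (1:ℝ)).mono' hc.aestronglyMeasurable
        (ae_of_all _ fun x => by
          rw [Real.norm_eq_abs, abs_of_nonneg (h01 x).1]; exact (h01 x).2)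
    have hUK_int : Integrable ((U \ K).indicator (fun _ => (1:ℝ))) ν :=
      (integrable_const (1:ℝ)).indicator hUKmeas
    have habs_int : Integrable (fun x => |A.indicator (fun _ => (1:ℝ)) x - h x|) ν :=
      (hind_int.sub hh_int).abs
    calc |(ν A).toReal - ∫ x, h x ∂ν|
        = |∫ x, (A.indicator (fun _ => (1:ℝ)) x - h x) ∂ν| := by
          rw [integral_sub hind_int hh_int, ← measureReal_def, ← integral_indicator_one hA]
          rfl
      _ ≤ ∫ x, |A.indicator (fun _ => (1:ℝ)) x - h x| ∂ν := by
          simpa [Real.norm_eq_abs] using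
            norm_integral_le_integral_norm (μ := ν)
              (fun x => A.indicator (fun _ => (1:ℝ)) x - h x)
      _ ≤ ∫ x, (U \ K).indicator (fun _ => (1:ℝ)) x ∂ν :=
          integral_mono habs_int hUK_int hind
      _ = (ν (U \ K)).toReal := integral_indicator_one hUKmeas
  have hP1 := approx P
  have hγ1 := approx γ
  have hmap : ∫ x, h x ∂P = ∫ ω, h (F ω) ∂ℙ :=
    integral_map hFmeas.aemeasurable hc.aestronglyMeasurable
  have hmain := main_est F G hFmeas hF2 hG2 hGmean hIBP h hc h01
  have hsum : (P (U \ K)).toReal + (γ (U \ K)).toReal ≤ ε := by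
    have h2 : (P (U \ K)).toReal + (γ (U \ K)).toReal = (μ (U \ K)).toReal := by
      rw [hμdef, Measure.add_apply, ENNReal.toReal_add (measure_ne_top _ _) (measure_ne_top _ _)]
    rw [h2]
    exact ENNReal.toReal_le_of_le_ofReal hε.le hUK
  calc |(P A).toReal - (γ A).toReal|
      ≤ |(P A).toReal - ∫ x, h x ∂P| + |(∫ x, h x ∂P) - ∫ x, h x ∂γ|
          + |(∫ x, h x ∂γ) - (γ A).toReal| := by
        have := abs_sub_le ((P A).toReal) (∫ x, h x ∂P) ((γ A).toReal)
        have h2 := abs_sub_le (∫ x, h x ∂P) (∫ x, h x ∂γ) ((γ A).toReal)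
        linarith
    _ ≤ (P (U \ K)).toReal + 2 * Real.sqrt (variance G ℙ) + (γ (U \ K)).toReal := by
        have e1 := hP1
        have e2 : |(∫ x, h x ∂P) - ∫ x, h x ∂γ| ≤ 2 * Real.sqrt (variance G ℙ) := by
          rw [hmap]; exact hmain
        have e3 : |(∫ x, h x ∂γ) - (γ A).toReal| ≤ (γ (U \ K)).toReal := by
          rw [abs_sub_comm]; exact hγ1
        exact add_le_add (add_le_add e1 e2) e3
    _ ≤ 2 * Real.sqrt (variance G ℙ) + ε := by linarith
end
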